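/- Let G be a group, N ⊴ G a normal subgroup with G/N ≅ Z, and ξ ∈ G an element generating G together with N (so every element of G is uniquely of the form gξˡ with g ∈ N, l ∈ Z). Let M be a G-module and ρ : N → M a 1-cocycle (ρ(gh) = ρ(g) + g·ρ(h)). Then there exists a unique family of 1-cocycles (ρ_l : N → M)_{l∈Z} with ρ₀ = 0, ρ₁ = ρ, and ρ_{l+m} = ρ_l + ξˡρ_m for all l,m ∈ Z, where (ξˡρ_m)(g) := ξˡ·ρ_m(ξ⁻ˡgξˡ). Moreover the map ω : G² → M defined by ω(g₁ξ^{l₁}, g₂ξ^{l₂}) = g₁·ρ_{l₁}(ξ^{l₁} g₂ ξ^{−l₁}) is a 2-cocycle on G. -/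

import Mathlib

namespace ExtendOneCocycleAux

variable {G M : Type*} [Group G] [AddCommGroup M] [DistribMulAction G M]
variable (N : Subgroup G) (hN : N.Normal) (ξ : G)

/-- Conjugation `g ↦ ξ^l g ξ^{-l}` as a map `N → N`. -/
def conjN (l : ℤ) (g : N) : N := ⟨ξ ^ l * (g : G) * (ξ ^ l)⁻¹, hN.conj_mem (g : G) g.2 (ξ ^ l)⟩

@[simp] lemma conjN_coe (l : ℤ) (g : N) :
    (conjN N hN ξ l g : G) = ξ ^ l * (g : G) * (ξ ^ l)⁻¹ := rfl

@[simp] lemma conjN_zero (g : N) : conjN N hN ξ 0 g = g := by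
  ext; simp [conjN]

lemma conjN_add (l m : ℤ) (g : N) :
    conjN N hN ξ (l + m) g = conjN N hN ξ l (conjN N hN ξ m g) := by
  ext; simp [conjN, zpow_add, mul_assoc]

lemma conjN_mul (l : ℤ) (g h : N) :
    conjN N hN ξ l (g * h) = conjN N hN ξ l g * conjN N hN ξ l h := by
  ext; simp [conjN, mul_assoc]

lemma conjN_cancel (l : ℤ) (g : N) : conjN N hN ξ (-l) (conjN N hN ξ l g) = g := by
  rw [← conjN_add]; simp

lemma mk_eq_conjN (l : ℤ) (g : N) (h : (ξ ^ l)⁻¹ * (g : G) * ξ ^ l ∈ N) :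
    (⟨(ξ ^ l)⁻¹ * (g : G) * ξ ^ l, h⟩ : N) = conjN N hN ξ (-l) g := by
  ext; simp [conjN, zpow_neg]

variable (ρ : N → M)

/-- The increment term. -/
def tT (l : ℤ) (g : N) : M := ξ ^ l • ρ (conjN N hN ξ (-l) g)

lemma tT_mul (hρ : ∀ g h : N, ρ (g * h) = ρ g + (g : G) • ρ h) (l : ℤ) (g h : N) :
    tT N hN ξ ρ l (g * h) = tT N hN ξ ρ l g + (g : G) • tT N hN ξ ρ l h := by
  unfold tT
  rw [conjN_mul, hρ, smul_add]
  congr 1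
  rw [smul_smul, smul_smul]
  congr 1
  simp [conjN, mul_assoc, zpow_neg]

lemma tT_shift (l m : ℤ) (g : N) :
    tT N hN ξ ρ (l + m) g = ξ ^ l • tT N hN ξ ρ m (conjN N hN ξ (-l) g) := by
  unfold tT
  rw [smul_smul, ← zpow_add, ← conjN_add]
  have h1 : -m + -l = -(l + m) := by ring
  rw [h1]

/-- The extended family of cocycles. -/
def rfam (l : ℤ) (g : N) : M :=
  if 0 ≤ l then ∑ i ∈ Finset.range l.toNat, tT N hN ξ ρ i g
  else - ∑ i ∈ Finset.range (-l).toNat, tT N hN ξ ρ (-(i : ℤ) - 1) g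

@[simp] lemma rfam_zero (g : N) : rfam N hN ξ ρ 0 g = 0 := by simp [rfam]

lemma rfam_succ (l : ℤ) (g : N) :
    rfam N hN ξ ρ (l + 1) g = rfam N hN ξ ρ l g + tT N hN ξ ρ l g := by
  unfold rfam
  rcases le_or_gt 0 l with hl | hl
  · rw [if_pos (show (0:ℤ) ≤ l + 1 by omega), if_pos hl]
    have h1 : (l + 1).toNat = l.toNat + 1 := by omega
    rw [h1, Finset.sum_range_succ, Int.toNat_of_nonneg hl]
  · rcases eq_or_lt_of_le (by omega : l + 1 ≤ 0) with h0 | hneg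
    · have hl1 : l = -1 := by omega
      subst hl1
      norm_num [Finset.sum_range_one]
    · rw [if_neg (show ¬ (0:ℤ) ≤ l + 1 by omega), if_neg (show ¬ (0:ℤ) ≤ l by omega)]
      have h1 : (-l).toNat = (-(l + 1)).toNat + 1 := by omega
      rw [h1, Finset.sum_range_succ]
      have h2 : (-((((-(l + 1)).toNat) : ℕ) : ℤ) - 1) = l := by omega
      rw [h2]
      abel

lemma rfam_one (g : N) : rfam N hN ξ ρ 1 g = ρ g := by
  have h := rfam_succ N hN ξ ρ 0 g
  norm_num at h
  rw [h]
  simp [tT]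

lemma rfam_cocycle (hρ : ∀ g h : N, ρ (g * h) = ρ g + (g : G) • ρ h) (l : ℤ) (g h : N) :
    rfam N hN ξ ρ l (g * h) = rfam N hN ξ ρ l g + (g : G) • rfam N hN ξ ρ l h := by
  induction l using Int.induction_on with
  | zero => simp
  | succ n ih =>
      rw [rfam_succ, rfam_succ, rfam_succ, ih, tT_mul N hN ξ ρ hρ, smul_add]
      abel
  | pred n ih =>
      have e : ∀ x : N, rfam N hN ξ ρ (-(n : ℤ) - 1) x =
          rfam N hN ξ ρ (-(n : ℤ)) x - tT N hN ξ ρ (-(n : ℤ) - 1) x := by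
        intro x
        have h := rfam_succ N hN ξ ρ (-(n : ℤ) - 1) x
        rw [show -(n : ℤ) - 1 + 1 = -(n : ℤ) by ring] at h
        rw [h]; abel
      rw [e, e, e, ih, tT_mul N hN ξ ρ hρ, smul_sub]
      abel

lemma rfam_add (l m : ℤ) (g : N) :
    rfam N hN ξ ρ (l + m) g =
      rfam N hN ξ ρ l g + ξ ^ l • rfam N hN ξ ρ m (conjN N hN ξ (-l) g) := by
  induction m using Int.induction_on with
  | zero => simp
  | succ n ih =>
      rw [show l + ((n : ℤ) + 1) = (l + n) + 1 by ring, rfam_succ, ih, rfam_succ,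
        tT_shift, smul_add]
      abel
  | pred n ih =>
      have e1 := rfam_succ N hN ξ ρ (l + -(n : ℤ) - 1) g
      rw [show l + -(n : ℤ) - 1 + 1 = l + -(n : ℤ) by ring] at e1
      have e2 := rfam_succ N hN ξ ρ (-(n : ℤ) - 1) (conjN N hN ξ (-l) g)
      rw [show -(n : ℤ) - 1 + 1 = -(n : ℤ) by ring] at e2
      have e3 : tT N hN ξ ρ (l + -(n : ℤ) - 1) g =
          ξ ^ l • tT N hN ξ ρ (-(n : ℤ) - 1) (conjN N hN ξ (-l) g) := by
        rw [show l + -(n : ℤ) - 1 = l + (-(n : ℤ) - 1) by ring, tT_shift]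
      have h4 : rfam N hN ξ ρ (l + -(n : ℤ) - 1) g =
          rfam N hN ξ ρ (l + -(n : ℤ)) g - tT N hN ξ ρ (l + -(n : ℤ) - 1) g := by
        rw [e1]; abel
      have h5 : rfam N hN ξ ρ (-(n : ℤ) - 1) (conjN N hN ξ (-l) g) =
          rfam N hN ξ ρ (-(n : ℤ)) (conjN N hN ξ (-l) g) -
            tT N hN ξ ρ (-(n : ℤ) - 1) (conjN N hN ξ (-l) g) := by
        rw [e2]; abel
      rw [show l + (-(n : ℤ) - 1) = l + -(n : ℤ) - 1 by ring, h4, ih, e3, h5, smul_sub]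
      abel

end ExtendOneCocycleAux

open ExtendOneCocycleAux in
/-- Let `N ⊴ G` with `G/N ≅ ℤ` generated by the image of `ξ` (every element of `G` is
uniquely `g ξ^l` with `g ∈ N`, `l ∈ ℤ`), let `M` be a `G`-module and `ρ : N → M` a
1-cocycle.  Then there is a unique family of 1-cocycles `(ρ_l)_{l ∈ ℤ}` with `ρ₀ = 0`,
`ρ₁ = ρ` and `ρ_{l+m} = ρ_l + ξ^l ρ_m`, and the map
`ω(g₁ξ^{l₁}, g₂ξ^{l₂}) = g₁ • ρ_{l₁}(ξ^{l₁} g₂ ξ^{−l₁})` is a 2-cocycle on `G`. -/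
theorem extend_one_cocycle {G M : Type*} [Group G] [AddCommGroup M] [DistribMulAction G M]
    (N : Subgroup G) (hN : N.Normal) (ξ : G)
    (hdec : ∀ x : G, ∃! q : N × ℤ, x = (q.1 : G) * ξ ^ q.2)
    (ρ : N → M) (hρ : ∀ g h : N, ρ (g * h) = ρ g + (g : G) • ρ h) :
    (∃! ρl : ℤ → N → M,
      (∀ l : ℤ, ∀ g h : N, ρl l (g * h) = ρl l g + (g : G) • ρl l h) ∧
      ρl 0 = 0 ∧ ρl 1 = ρ ∧
      (∀ l m : ℤ, ∀ g : N,
        ρl (l + m) g = ρl l g + ξ ^ l •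
          ρl m ⟨(ξ ^ l)⁻¹ * (g : G) * ξ ^ l, by
            simpa using hN.conj_mem (g : G) g.2 (ξ ^ l)⁻¹⟩)) ∧
    (∀ ρl : ℤ → N → M,
      ((∀ l : ℤ, ∀ g h : N, ρl l (g * h) = ρl l g + (g : G) • ρl l h) ∧
        ρl 0 = 0 ∧ ρl 1 = ρ ∧
        (∀ l m : ℤ, ∀ g : N,
          ρl (l + m) g = ρl l g + ξ ^ l •
            ρl m ⟨(ξ ^ l)⁻¹ * (g : G) * ξ ^ l, by
              simpa using hN.conj_mem (g : G) g.2 (ξ ^ l)⁻¹⟩)) →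
      ∃ ω : G → G → M,
        (∀ (g₁ g₂ : N) (l₁ l₂ : ℤ),
          ω ((g₁ : G) * ξ ^ l₁) ((g₂ : G) * ξ ^ l₂) =
            (g₁ : G) • ρl l₁ ⟨ξ ^ l₁ * (g₂ : G) * (ξ ^ l₁)⁻¹,
              hN.conj_mem (g₂ : G) g₂.2 (ξ ^ l₁)⟩) ∧
        (∀ x y z : G, x • ω y z - ω (x * y) z + ω x (y * z) - ω x y = 0)) := by
  constructor
  · -- existence and uniqueness of the family
    refine ⟨rfam N hN ξ ρ, ⟨rfam_cocycle N hN ξ ρ hρ, ?_, ?_, ?_⟩, ?_⟩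
    · funext g; exact rfam_zero N hN ξ ρ g
    · funext g; exact rfam_one N hN ξ ρ g
    · intro l m g
      rw [mk_eq_conjN]
      exact rfam_add N hN ξ ρ l m g
    · rintro ρl' ⟨hc', h0', h1', hadd'⟩
      have hstep : ∀ (l : ℤ) (g : N), ρl' (l + 1) g = ρl' l g + tT N hN ξ ρ l g := by
        intro l g
        have h := hadd' l 1 g
        rw [mk_eq_conjN, h1'] at h
        exact h
      have key : ∀ (l : ℤ) (g : N), ρl' l g = rfam N hN ξ ρ l g := by
        intro l
        induction l using Int.induction_on with
        | zero => intro g; simp [h0']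
        | succ n ih => intro g; rw [hstep, rfam_succ, ih g]
        | pred n ih =>
            intro g
            have e1 := hstep (-(n : ℤ) - 1) g
            have e2 := rfam_succ N hN ξ ρ (-(n : ℤ) - 1) g
            rw [show -(n : ℤ) - 1 + 1 = -(n : ℤ) by ring] at e1 e2
            have h := ih g
            rw [e1, e2] at h
            exact add_right_cancel h
      funext l g
      exact key l g
  · -- construction of the 2-cocycle
    rintro ρl ⟨hc, h0, h1, hadd⟩
    choose dec hdec1 hdec2 using hdec
    have dec_mul : ∀ (g : N) (l : ℤ), dec ((g : G) * ξ ^ l) = (g, l) := by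
      intro g l
      exact (hdec2 _ (g, l) rfl).symm
    set ω : G → G → M :=
      fun x y => ((dec x).1 : G) • ρl (dec x).2 (conjN N hN ξ (dec x).2 (dec y).1) with hω
    have wval : ∀ (g h : N) (l m : ℤ),
        ω ((g : G) * ξ ^ l) ((h : G) * ξ ^ m) = (g : G) • ρl l (conjN N hN ξ l h) := by
      intro g h l m
      rw [hω]
      simp only [dec_mul]
    have hprod : ∀ (g h : N) (l m : ℤ),
        ((g : G) * ξ ^ l) * ((h : G) * ξ ^ m) =
          ((g * conjN N hN ξ l h : N) : G) * ξ ^ (l + m) := by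
      intro g h l m
      simp [conjN, zpow_add, mul_assoc]
    have hadd' : ∀ (l m : ℤ) (g : N),
        ρl (l + m) g = ρl l g + ξ ^ l • ρl m (conjN N hN ξ (-l) g) := by
      intro l m g
      have h := hadd l m g
      rw [mk_eq_conjN] at h
      exact h
    refine ⟨ω, fun g₁ g₂ l₁ l₂ => wval g₁ g₂ l₁ l₂, ?_⟩
    intro x y z
    obtain ⟨g₁, a, hx⟩ : ∃ (g : N) (l : ℤ), x = (g : G) * ξ ^ l :=
      ⟨(dec x).1, (dec x).2, hdec1 x⟩
    obtain ⟨g₂, b, hy⟩ : ∃ (g : N) (l : ℤ), y = (g : G) * ξ ^ l :=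
      ⟨(dec y).1, (dec y).2, hdec1 y⟩
    obtain ⟨g₃, c, hz⟩ : ∃ (g : N) (l : ℤ), z = (g : G) * ξ ^ l :=
      ⟨(dec z).1, (dec z).2, hdec1 z⟩
    subst hx hy hz
    rw [hprod g₁ g₂ a b, hprod g₂ g₃ b c, wval, wval, wval, wval]
    -- expand ρl (a+b) and ρl a on a product
    have hAB : ρl (a + b) (conjN N hN ξ (a + b) g₃) =
        ρl a (conjN N hN ξ a (conjN N hN ξ b g₃)) + ξ ^ a • ρl b (conjN N hN ξ b g₃) := by
      rw [conjN_add, hadd' a b, conjN_cancel]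
    have hsplit : ρl a (conjN N hN ξ a (g₂ * conjN N hN ξ b g₃)) =
        ρl a (conjN N hN ξ a g₂) +
          (conjN N hN ξ a g₂ : G) • ρl a (conjN N hN ξ a (conjN N hN ξ b g₃)) := by
      rw [conjN_mul, hc]
    rw [hAB, hsplit]
    have hkey : ∀ B : M, ((g₁ : G) * ξ ^ a) • (g₂ : G) • B =
        (g₁ : G) • (conjN N hN ξ a g₂ : G) • ξ ^ a • B := by
      intro B
      rw [smul_smul, smul_smul, smul_smul]
      congr 1
      simp [conjN, mul_assoc]
    rw [hkey]
    simp only [MulMemClass.coe_mul, smul_add, mul_smul]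
    abel
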